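/- For any d ≥ 2 and x, y, u, v ∈ ℝ^d with strictly positive coordinates, there exist x', y', u', v' ∈ ℝ² with strictly positive coordinates such that the extremal ratios are preserved (max_i y'_i/x'_i = max_i y_i/x_i, min_i y'_i/x'_i = min_i y_i/x_i, and similarly for (u,v)), and F₂(x',y';u',v') ≥ F_d(x,y;u,v), where F(x,y;u,v) := ((x·u)(y·v))/((x·v)(y·u)). -/

import Mathlib

open Matrix

private lemma sup2 (f : Fin 2 → ℝ) : (⨆ i, f i) = max (f 0) (f 1) := by
  apply le_antisymm
  · exact ciSup_le fun i => by fin_cases i <;> simp [le_max_left, le_max_right]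
  · exact max_le (le_ciSup (Finite.bddAbove_range f) 0) (le_ciSup (Finite.bddAbove_range f) 1)

private lemma inf2 (f : Fin 2 → ℝ) : (⨅ i, f i) = min (f 0) (f 1) := by
  apply le_antisymm
  · exact le_min (ciInf_le (Finite.bddBelow_range f) 0) (ciInf_le (Finite.bddBelow_range f) 1)
  · exact le_ciInf fun i => by fin_cases i <;> simp [min_le_left, min_le_right]

set_option maxHeartbeats 1000000 in
theorem stmt14 (d : ℕ) (hd : 2 ≤ d) (x y u v : Fin d → ℝ)
    (hx : ∀ i, 0 < x i) (hy : ∀ i, 0 < y i)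
    (hu : ∀ i, 0 < u i) (hv : ∀ i, 0 < v i) :
    ∃ x' y' u' v' : Fin 2 → ℝ,
      (∀ i, 0 < x' i) ∧ (∀ i, 0 < y' i) ∧ (∀ i, 0 < u' i) ∧ (∀ i, 0 < v' i) ∧
      (⨆ i, y' i / x' i) = (⨆ i, y i / x i) ∧
      (⨅ i, y' i / x' i) = (⨅ i, y i / x i) ∧
      (⨆ i, v' i / u' i) = (⨆ i, v i / u i) ∧
      (⨅ i, v' i / u' i) = (⨅ i, v i / u i) ∧
      (x' ⬝ᵥ u') * (y' ⬝ᵥ v') / ((x' ⬝ᵥ v') * (y' ⬝ᵥ u')) ≥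
        (x ⬝ᵥ u) * (y ⬝ᵥ v) / ((x ⬝ᵥ v) * (y ⬝ᵥ u)) := by
  haveI : Nonempty (Fin d) := ⟨⟨0, by omega⟩⟩
  set a : Fin d → ℝ := fun i => y i / x i with ha
  set b : Fin d → ℝ := fun i => v i / u i with hb
  set M : ℝ := ⨆ i, a i with hM
  set m : ℝ := ⨅ i, a i with hm
  set A : ℝ := ⨆ i, b i with hA
  set c : ℝ := ⨅ i, b i with hc
  -- bounds
  have haM : ∀ i, a i ≤ M := fun i => le_ciSup (Finite.bddAbove_range a) i
  have hma : ∀ i, m ≤ a i := fun i => ciInf_le (Finite.bddBelow_range a) i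
  have hbA : ∀ i, b i ≤ A := fun i => le_ciSup (Finite.bddAbove_range b) i
  have hcb : ∀ i, c ≤ b i := fun i => ciInf_le (Finite.bddBelow_range b) i
  -- attainment
  obtain ⟨iM, hiM⟩ := Finite.exists_max a
  obtain ⟨im, him⟩ := Finite.exists_min a
  obtain ⟨jA, hjA⟩ := Finite.exists_max b
  obtain ⟨jc, hjc⟩ := Finite.exists_min b
  have hMeq : M = a iM := le_antisymm (ciSup_le hiM) (haM iM)
  have hmeq : m = a im := le_antisymm (hma im) (le_ciInf him)
  have hAeq : A = b jA := le_antisymm (ciSup_le hjA) (hbA jA)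
  have hceq : c = b jc := le_antisymm (hcb jc) (le_ciInf hjc)
  have hapos : ∀ i, 0 < a i := fun i => div_pos (hy i) (hx i)
  have hbpos : ∀ i, 0 < b i := fun i => div_pos (hv i) (hu i)
  have hm0 : 0 < m := hmeq ▸ hapos im
  have hc0 : 0 < c := hceq ▸ hbpos jc
  have hmM : m ≤ M := (hma iM).trans (haM iM)
  have hcA : c ≤ A := (hcb jA).trans (hbA jA)
  have hM0 : 0 < M := hm0.trans_le hmM
  have hA0 : 0 < A := hc0.trans_le hcA
  -- convex coefficients
  set L : Fin d → ℝ := fun i => if M = m then 1/2 else (a i - m)/(M - m) with hL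
  set G : Fin d → ℝ := fun i => if A = c then 1/2 else (b i - c)/(A - c) with hG
  have hL0 : ∀ i, 0 ≤ L i := by
    intro i; simp only [hL]
    split_ifs with h
    · norm_num
    · exact div_nonneg (sub_nonneg.2 (hma i)) (sub_nonneg.2 hmM)
  have hL1 : ∀ i, L i ≤ 1 := by
    intro i; simp only [hL]
    split_ifs with h
    · norm_num
    · exact div_le_one_of_le₀ (by linarith [haM i]) (by linarith [lt_of_le_of_ne hmM (Ne.symm h)])
  have hG0 : ∀ i, 0 ≤ G i := by
    intro i; simp only [hG]
    split_ifs with h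
    · norm_num
    · exact div_nonneg (sub_nonneg.2 (hcb i)) (sub_nonneg.2 hcA)
  have hG1 : ∀ i, G i ≤ 1 := by
    intro i; simp only [hG]
    split_ifs with h
    · norm_num
    · exact div_le_one_of_le₀ (by linarith [hbA i]) (by linarith [lt_of_le_of_ne hcA (Ne.symm h)])
  have hya : ∀ i, y i = (m + L i * (M - m)) * x i := by
    intro i
    have hxi := (hx i).ne'
    simp only [hL]
    split_ifs with h
    · have h1 : a i = m := le_antisymm (h ▸ haM i) (hma i)
      have : y i = a i * x i := by show y i = y i / x i * x i; rw [div_mul_cancel₀ _ hxi]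
      rw [this, h1, h]; ring
    · have hMm : M - m ≠ 0 := sub_ne_zero.2 h
      have : y i = a i * x i := by show y i = y i / x i * x i; rw [div_mul_cancel₀ _ hxi]
      rw [this]; field_simp; ring
  have hvb : ∀ i, v i = (c + G i * (A - c)) * u i := by
    intro i
    have hui := (hu i).ne'
    simp only [hG]
    split_ifs with h
    · have h1 : b i = c := le_antisymm (h ▸ hbA i) (hcb i)
      have : v i = b i * u i := by show v i = v i / u i * u i; rw [div_mul_cancel₀ _ hui]
      rw [this, h1, h]; ring
    · have hAc : A - c ≠ 0 := sub_ne_zero.2 h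
      have : v i = b i * u i := by show v i = v i / u i * u i; rw [div_mul_cancel₀ _ hui]
      rw [this]; field_simp; ring
  -- corner masses
  set p : ℝ := ∑ i, (x i * u i) * (L i * G i) with hp
  set q : ℝ := ∑ i, (x i * u i) * (L i * (1 - G i)) with hq
  set r : ℝ := ∑ i, (x i * u i) * ((1 - L i) * G i) with hr
  set s : ℝ := ∑ i, (x i * u i) * ((1 - L i) * (1 - G i)) with hs
  have hp0 : 0 ≤ p := Finset.sum_nonneg fun i _ =>
    mul_nonneg (mul_nonneg (hx i).le (hu i).le) (mul_nonneg (hL0 i) (hG0 i))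
  have hq0 : 0 ≤ q := Finset.sum_nonneg fun i _ =>
    mul_nonneg (mul_nonneg (hx i).le (hu i).le) (mul_nonneg (hL0 i) (by linarith [hG1 i]))
  have hr0 : 0 ≤ r := Finset.sum_nonneg fun i _ =>
    mul_nonneg (mul_nonneg (hx i).le (hu i).le) (mul_nonneg (by linarith [hL1 i]) (hG0 i))
  have hs0 : 0 ≤ s := Finset.sum_nonneg fun i _ =>
    mul_nonneg (mul_nonneg (hx i).le (hu i).le)
      (mul_nonneg (by linarith [hL1 i]) (by linarith [hG1 i]))
  -- W1 = p + q > 0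
  have hpq : p + q = ∑ i, (x i * u i) * L i := by
    rw [hp, hq, ← Finset.sum_add_distrib]
    exact Finset.sum_congr rfl fun i _ => by ring
  have hrs : r + s = ∑ i, (x i * u i) * (1 - L i) := by
    rw [hr, hs, ← Finset.sum_add_distrib]
    exact Finset.sum_congr rfl fun i _ => by ring
  have hLiM : 0 < L iM := by
    simp only [hL]
    split_ifs with h
    · norm_num
    · have hMm : 0 < M - m := sub_pos.2 (lt_of_le_of_ne hmM (Ne.symm h))
      apply div_pos _ hMm
      rw [← hMeq]; exact hMm
  have hLim : L im < 1 := by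
    simp only [hL]
    split_ifs with h
    · norm_num
    · have hMm : 0 < M - m := sub_pos.2 (lt_of_le_of_ne hmM (Ne.symm h))
      rw [div_lt_one hMm, ← hmeq]
      linarith
  have hW1 : 0 < p + q := by
    rw [hpq]
    apply Finset.sum_pos'
    · exact fun i _ => mul_nonneg (mul_nonneg (hx i).le (hu i).le) (hL0 i)
    · exact ⟨iM, Finset.mem_univ iM, mul_pos (mul_pos (hx iM) (hu iM)) hLiM⟩
  have hW2 : 0 < r + s := by
    rw [hrs]
    apply Finset.sum_pos'
    · exact fun i _ => mul_nonneg (mul_nonneg (hx i).le (hu i).le) (by linarith [hL1 i])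
    · exact ⟨im, Finset.mem_univ im, mul_pos (mul_pos (hx im) (hu im)) (by linarith)⟩
  -- dot product identities
  have hXU : x ⬝ᵥ u = p + q + r + s := by
    simp only [dotProduct, hp, hq, hr, hs, ← Finset.sum_add_distrib]
    exact Finset.sum_congr rfl fun i _ => by ring
  have hYU : y ⬝ᵥ u = (p + q) * M + (r + s) * m := by
    simp only [dotProduct, hp, hq, hr, hs, Finset.sum_add_distrib.symm, Finset.sum_mul,
      ← Finset.sum_add_distrib]
    refine Finset.sum_congr rfl fun i _ => ?_
    rw [hya i]; ring
  have hXV : x ⬝ᵥ v = (p + r) * A + (q + s) * c := by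
    simp only [dotProduct, hp, hq, hr, hs, Finset.sum_add_distrib.symm, Finset.sum_mul,
      ← Finset.sum_add_distrib]
    refine Finset.sum_congr rfl fun i _ => ?_
    rw [hvb i]; ring
  have hYV : y ⬝ᵥ v = p * (M * A) + q * (M * c) + r * (m * A) + s * (m * c) := by
    simp only [dotProduct, hp, hq, hr, hs, Finset.sum_add_distrib.symm, Finset.sum_mul,
      ← Finset.sum_add_distrib]
    refine Finset.sum_congr rfl fun i _ => ?_
    rw [hya i, hvb i]; ring
  -- the two-dimensional witnesses
  refine ⟨![p + q, r + s], ![(p + q) * M, (r + s) * m], ![1, 1], ![A, c],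
    ?_, ?_, ?_, ?_, ?_, ?_, ?_, ?_, ?_⟩
  · intro i; fin_cases i
    · simpa using hW1
    · simpa using hW2
  · intro i; fin_cases i
    · simpa using mul_pos hW1 hM0
    · simpa using mul_pos hW2 hm0
  · intro i; fin_cases i <;> norm_num
  · intro i; fin_cases i
    · simpa using hA0
    · simpa using hc0
  · rw [sup2]
    simp only [Matrix.cons_val_zero, Matrix.cons_val_one, Matrix.head_cons]
    rw [mul_div_cancel_left₀ _ hW1.ne', mul_div_cancel_left₀ _ hW2.ne']
    exact max_eq_left hmM
  · rw [inf2]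
    simp only [Matrix.cons_val_zero, Matrix.cons_val_one, Matrix.head_cons]
    rw [mul_div_cancel_left₀ _ hW1.ne', mul_div_cancel_left₀ _ hW2.ne']
    exact min_eq_right hmM
  · rw [sup2]
    simp only [Matrix.cons_val_zero, Matrix.cons_val_one, Matrix.head_cons]
    rw [div_one, div_one]
    exact max_eq_left hcA
  · rw [inf2]
    simp only [Matrix.cons_val_zero, Matrix.cons_val_one, Matrix.head_cons]
    rw [div_one, div_one]
    exact min_eq_right hcA
  · -- the main inequality
    have hdot1 : (![p + q, r + s] : Fin 2 → ℝ) ⬝ᵥ ![1, 1] = (p + q) + (r + s) := by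
      simp [dotProduct, Fin.sum_univ_two]
    have hdot2 : (![(p + q) * M, (r + s) * m] : Fin 2 → ℝ) ⬝ᵥ ![A, c]
        = (p + q) * M * A + (r + s) * m * c := by
      simp [dotProduct, Fin.sum_univ_two]
    have hdot3 : (![p + q, r + s] : Fin 2 → ℝ) ⬝ᵥ ![A, c] = (p + q) * A + (r + s) * c := by
      simp [dotProduct, Fin.sum_univ_two]
    have hdot4 : (![(p + q) * M, (r + s) * m] : Fin 2 → ℝ) ⬝ᵥ ![1, 1]
        = (p + q) * M + (r + s) * m := by
      simp [dotProduct, Fin.sum_univ_two]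
    rw [hdot1, hdot2, hdot3, hdot4, hXU, hYU, hXV, hYV]
    have hSa : 0 < (p + q) * M + (r + s) * m :=
      add_pos (mul_pos hW1 hM0) (mul_pos hW2 hm0)
    have hS1 : 0 < p + q + r + s := by linarith
    have hSb : 0 < (p + r) * A + (q + s) * c := by
      have h1 : 0 ≤ (p + r) * (A - c) := mul_nonneg (add_nonneg hp0 hr0) (sub_nonneg.2 hcA)
      nlinarith [mul_pos hS1 hc0]
    have hXv2 : 0 < (p + q) * A + (r + s) * c :=
      add_pos (mul_pos hW1 hA0) (mul_pos hW2 hc0)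
    rw [ge_iff_le, div_le_div_iff₀ (mul_pos hSb hSa) (mul_pos hXv2 hSa)]
    have key : (p * (M * A) + q * (M * c) + r * (m * A) + s * (m * c))
          * ((p + q) * A + (r + s) * c)
        ≤ ((p + q) * M * A + (r + s) * m * c) * ((p + r) * A + (q + s) * c) := by
      have h1 : 0 ≤ q * s * c * (M - m) * (A - c) := by
        apply mul_nonneg
        apply mul_nonneg
        apply mul_nonneg (mul_nonneg hq0 hs0) hc0.le
        · linarith
        · linarith
      have h2 : 0 ≤ q * r * (M - m) * ((A + c) * (A - c)) := by
        apply mul_nonneg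
        apply mul_nonneg (mul_nonneg hq0 hr0)
        · linarith
        · apply mul_nonneg (by linarith) (by linarith)
      have h3 : 0 ≤ p * r * A * (M - m) * (A - c) := by
        apply mul_nonneg
        apply mul_nonneg
        apply mul_nonneg (mul_nonneg hp0 hr0) hA0.le
        · linarith
        · linarith
      nlinarith [h1, h2, h3]
    calc (p + q + r + s) * (p * (M * A) + q * (M * c) + r * (m * A) + s * (m * c))
          * (((p + q) * A + (r + s) * c) * ((p + q) * M + (r + s) * m))
        = ((p + q + r + s) * ((p + q) * M + (r + s) * m))
            * ((p * (M * A) + q * (M * c) + r * (m * A) + s * (m * c))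
              * ((p + q) * A + (r + s) * c)) := by ring
      _ ≤ ((p + q + r + s) * ((p + q) * M + (r + s) * m))
            * (((p + q) * M * A + (r + s) * m * c) * ((p + r) * A + (q + s) * c)) := by
          exact mul_le_mul_of_nonneg_left key (mul_nonneg hS1.le hSa.le)
      _ = (p + q + (r + s)) * ((p + q) * M * A + (r + s) * m * c)
            * (((p + r) * A + (q + s) * c) * ((p + q) * M + (r + s) * m)) := by ring
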